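/- Let X be a topological vector space and Y ⊆ X a closed subspace. If V ⊆ X is an open convex set with ⋂_{ε>0} εV = Y, then V + Y = V, and the image U := q(V) under the quotient map q : X → X/Y is an open convex neighborhood of 0 in X/Y that is algebraically bounded (contains no half-line), i.e. ⋂_{ε>0} εU = {0}. -/

import Mathlib

open Pointwise

theorem stmt_12 {X : Type*} [AddCommGroup X] [Module ℝ X] [TopologicalSpace X]
    [IsTopologicalAddGroup X] [ContinuousSMul ℝ X]
    (Y : Submodule ℝ X) (hYclosed : IsClosed (Y : Set X))
    (V : Set X) (hVopen : IsOpen V) (hVconv : Convex ℝ V)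
    (hV : (⋂ ε > (0:ℝ), ε • V) = (Y : Set X)) :
    V + (Y : Set X) = V ∧
    IsOpen (Submodule.Quotient.mk '' V : Set (X ⧸ Y)) ∧
    Convex ℝ (Submodule.Quotient.mk '' V : Set (X ⧸ Y)) ∧
    (0 : X ⧸ Y) ∈ (Submodule.Quotient.mk '' V : Set (X ⧸ Y)) ∧
    (⋂ ε > (0:ℝ), ε • (Submodule.Quotient.mk '' V : Set (X ⧸ Y))) = {0} := by
  -- membership in the intersection
  have hmem : ∀ x : X, x ∈ (Y : Set X) ↔ ∀ ε > (0:ℝ), x ∈ ε • V := by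
    intro x
    rw [← hV]
    simp [Set.mem_iInter]
  -- Y ⊆ V
  have hYV : (Y : Set X) ⊆ V := by
    intro y hy
    have := (hmem y).1 hy 1 one_pos
    simpa using this
  have h0V : (0 : X) ∈ V := hYV Y.zero_mem
  -- V + Y = V
  have hVY : V + (Y : Set X) = V := by
    apply Set.Subset.antisymm
    · rintro z ⟨v, hv, y, hy, rfl⟩
      -- find s > 1 with s • v ∈ V
      have hcont : Continuous fun s : ℝ => s • v := continuous_id.smul continuous_const
      have hopen : IsOpen {s : ℝ | s • v ∈ V} := hVopen.preimage hcont
      have h1 : (1 : ℝ) ∈ {s : ℝ | s • v ∈ V} := by simpa using hv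
      obtain ⟨δ, hδ, hball⟩ := Metric.isOpen_iff.1 hopen 1 h1
      set s : ℝ := 1 + δ / 2 with hs
      have hs1 : 1 < s := by rw [hs]; linarith
      have hsV : s • v ∈ V := by
        apply hball
        simp only [Metric.mem_ball, dist_eq_norm]
        rw [show s - 1 = δ / 2 by rw [hs]; ring, Real.norm_eq_abs, abs_of_pos (by positivity : (0:ℝ) < δ/2)]
        linarith
      have hs0 : (0:ℝ) < s := by linarith
      have ht : (0:ℝ) < 1 - 1/s := by
        have : 1/s < 1 := by
          rw [div_lt_one hs0]; linarith
        linarith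
      have hyV : (1 - 1/s)⁻¹ • y ∈ V := hYV (Y.smul_mem _ hy)
      have := hVconv hsV hyV (by positivity : (0:ℝ) ≤ 1/s) (le_of_lt ht)
        (by field_simp; ring)
      have heq : (1/s) • (s • v) + (1 - 1/s) • ((1 - 1/s)⁻¹ • y) = v + y := by
        rw [smul_smul, smul_smul, mul_inv_cancel₀ (ne_of_gt ht), one_div,
          inv_mul_cancel₀ (ne_of_gt hs0), one_smul, one_smul]
      rw [heq] at this
      exact this
    · intro v hv
      exact ⟨v, hv, 0, Y.zero_mem, by simp⟩
  refine ⟨hVY, ?_, ?_, ?_, ?_⟩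
  · have : (Submodule.Quotient.mk '' V : Set (X ⧸ Y)) = Y.mkQ '' V := rfl
    rw [this]
    exact Submodule.isOpenMap_mkQ Y V hVopen
  · exact hVconv.linear_image Y.mkQ
  · exact ⟨0, h0V, by simp⟩
  · apply Set.Subset.antisymm
    · intro u hu
      simp only [Set.mem_iInter] at hu
      obtain ⟨x, rfl⟩ := Submodule.Quotient.mk_surjective Y u
      simp only [Set.mem_singleton_iff, Submodule.Quotient.mk_eq_zero]
      apply (hmem x).2
      intro ε hε
      obtain ⟨w, ⟨v, hv, hw⟩, hwx⟩ := hu ε hε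
      -- w = mk v, ε • w = mk x, so x - ε • v ∈ Y
      have hmk : Submodule.Quotient.mk (ε • v) = (Submodule.Quotient.mk x : X ⧸ Y) := by
        rw [Submodule.Quotient.mk_smul, hw]; exact hwx
      have hy : x - ε • v ∈ Y := by
        have h2 := (Submodule.Quotient.eq Y).1 hmk
        simpa [neg_sub] using Y.neg_mem h2
      -- x = ε • v + (x - ε • v) ∈ ε • V + Y = ε • (V + Y) = ε • V
      have hx : x ∈ ε • V + (Y : Set X) :=
        ⟨ε • v, Set.smul_mem_smul_set hv, x - ε • v, hy, by simp⟩
      have hset : ε • V + (Y : Set X) ⊆ ε • V := by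
        rintro _ ⟨_, ⟨v', hv', rfl⟩, y', hy', rfl⟩
        refine ⟨v' + ε⁻¹ • y', ?_, ?_⟩
        · rw [← hVY]; exact ⟨v', hv', ε⁻¹ • y', Y.smul_mem _ hy', rfl⟩
        · show ε • (v' + ε⁻¹ • y') = ε • v' + y'
          rw [smul_add, smul_smul, mul_inv_cancel₀ (ne_of_gt hε), one_smul]
      exact hset hx
    · intro u hu
      simp only [Set.mem_singleton_iff] at hu
      subst hu
      simp only [Set.mem_iInter]
      intro ε hε
      exact ⟨0, ⟨0, h0V, by simp⟩, by simp⟩
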